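/- Let X1', X1'', X2, S1, N1 be independent zero-mean Gaussians with variances P1', P1'', P2, Q1, 1. With D = P1+a²P2+1 (P1 = P1'+P1''), set U1 = X1' + α1S1 where α1 = P1'/D, and Y1 = X1' + X1'' + aX2 + S1 + N1. Then I(U1; Y1) − I(U1; S1) = (1/2)log(1 + P1'/(a²P2 + P1'' + 1)). -/

import Mathlib

/-- Mutual information of two jointly Gaussian (zero-mean) real variables with variances
`vA`, `vB` and covariance `c` (logarithm base 2). -/
noncomputable def gaussMI (vA vB c : ℝ) : ℝ :=
  (1 / 2) * Real.logb 2 (vA * vB / (vA * vB - c ^ 2))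

/-- first layer of the layered dirty paper coding scheme:
with `U1 = X1' + α1 S1`, `α1 = P1'/(P1+a²P2+1)` and
`Y1 = X1' + X1'' + aX2 + S1 + N1`, one has
`I(U1;Y1) - I(U1;S1) = (1/2)log(1 + P1'/(a²P2+P1''+1))`. -/
theorem stmt8 (P1 P1' P1'' P2 Q1 a : ℝ)
    (hP1' : 0 < P1') (hP1'' : 0 < P1'') (hP2 : 0 < P2) (hQ1 : 0 < Q1)
    (hsplit : P1 = P1' + P1'') :
    let D := P1 + a ^ 2 * P2 + 1
    let α1 := P1' / D
    gaussMI (P1' + α1 ^ 2 * Q1) (P1 + a ^ 2 * P2 + Q1 + 1) (P1' + α1 * Q1)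
      - gaussMI (P1' + α1 ^ 2 * Q1) Q1 (α1 * Q1)
      = (1 / 2) * Real.logb 2 (1 + P1' / (a ^ 2 * P2 + P1'' + 1)) := by
  subst hsplit
  intro D α1
  have hDv : D = P1' + P1'' + a ^ 2 * P2 + 1 := rfl
  have hαv : α1 = P1' / D := rfl
  rw [hαv, hDv]
  clear_value α1 D
  simp only [gaussMI]
  have hd : (0:ℝ) < P1' + P1'' + a ^ 2 * P2 + 1 := by positivity
  have hdne : (P1' + P1'' + a ^ 2 * P2 + 1) ≠ 0 := hd.ne'
  have he : (0:ℝ) < a ^ 2 * P2 + P1'' + 1 := by positivity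
  have hsub1 : (P1' + (P1' / (P1' + P1'' + a ^ 2 * P2 + 1)) ^ 2 * Q1)
        * (P1' + P1'' + a ^ 2 * P2 + Q1 + 1)
      - (P1' + (P1' / (P1' + P1'' + a ^ 2 * P2 + 1)) * Q1) ^ 2
      = P1' * ((P1' + P1'' + a ^ 2 * P2 + 1 + Q1) * (a ^ 2 * P2 + P1'' + 1))
          / (P1' + P1'' + a ^ 2 * P2 + 1) := by
    field_simp
    ring
  have hsub2 : (P1' + (P1' / (P1' + P1'' + a ^ 2 * P2 + 1)) ^ 2 * Q1) * Q1
      - ((P1' / (P1' + P1'' + a ^ 2 * P2 + 1)) * Q1) ^ 2 = P1' * Q1 := by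
    field_simp
    ring
  rw [hsub1, hsub2]
  have h1 : (P1' + (P1' / (P1' + P1'' + a ^ 2 * P2 + 1)) ^ 2 * Q1)
        * (P1' + P1'' + a ^ 2 * P2 + Q1 + 1)
      / (P1' * ((P1' + P1'' + a ^ 2 * P2 + 1 + Q1) * (a ^ 2 * P2 + P1'' + 1))
          / (P1' + P1'' + a ^ 2 * P2 + 1))
      = ((P1' + P1'' + a ^ 2 * P2 + 1) ^ 2 + P1' * Q1)
          / ((P1' + P1'' + a ^ 2 * P2 + 1) * (a ^ 2 * P2 + P1'' + 1)) := by
    rw [div_eq_div_iff (by positivity) (by positivity)]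
    field_simp
    ring
  have h2 : (P1' + (P1' / (P1' + P1'' + a ^ 2 * P2 + 1)) ^ 2 * Q1) * Q1
      / (P1' * Q1)
      = ((P1' + P1'' + a ^ 2 * P2 + 1) ^ 2 + P1' * Q1)
          / (P1' + P1'' + a ^ 2 * P2 + 1) ^ 2 := by
    rw [div_eq_div_iff (by positivity) (by positivity)]
    field_simp
  rw [h1, h2, ← mul_sub,
    ← Real.logb_div (by positivity) (by positivity)]
  congr 1
  congr 1
  field_simp
  ring
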